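/- Let (Ω, Σ, μ) be a measure space, g : Ω → ℂ a measurable function with |g(ω)| ≤ 1 for almost every ω, and f ∈ L²(μ). Then the averages (1/n) ∑_{m=1}^n g^m · f converge in the L²-norm to the function π(f) defined by π(f)(ω) = f(ω) if g(ω) = 1 and π(f)(ω) = 0 otherwise. -/

import Mathlib

open Filter Finset MeasureTheory

private lemma aux_norm_bound {z : ℂ} (hz : ‖z‖ ≤ 1) (n : ℕ) :
    ‖∑ m ∈ Finset.Icc 1 n, z ^ m‖ ≤ n := by
  calc ‖∑ m ∈ Finset.Icc 1 n, z ^ m‖ ≤ ∑ m ∈ Finset.Icc 1 n, ‖z ^ m‖ :=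
        norm_sum_le _ _
    _ ≤ ∑ m ∈ Finset.Icc 1 n, 1 := by
        refine Finset.sum_le_sum fun m _ => ?_
        rw [norm_pow]
        exact pow_le_one₀ (norm_nonneg z) hz
    _ = n := by simp

private lemma aux_geom_bound {z : ℂ} (hz : ‖z‖ ≤ 1) (hz1 : z ≠ 1) (n : ℕ) :
    ‖∑ m ∈ Finset.Icc 1 n, z ^ m‖ ≤ 2 / ‖1 - z‖ := by
  have hsum : ∑ m ∈ Finset.Icc 1 n, z ^ m = z * ((z ^ n - 1) / (z - 1)) := by
    rw [← geom_sum_eq hz1, Finset.mul_sum]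
    rw [show Finset.Icc 1 n = Finset.Ico 1 (n + 1) by rfl]
    rw [Finset.sum_Ico_eq_sum_range]
    simp [pow_succ, mul_comm, pow_add]
  rw [hsum, norm_mul, norm_div, norm_sub_rev (1:ℂ) z]
  have h1 : ‖z ^ n - 1‖ ≤ 2 := by
    calc ‖z ^ n - 1‖ ≤ ‖z ^ n‖ + ‖(1:ℂ)‖ := norm_sub_le _ _
      _ ≤ 1 + 1 := by
          rw [norm_pow, norm_one]
          exact add_le_add (pow_le_one₀ (norm_nonneg z) hz) le_rfl
      _ = 2 := by norm_num
  have hz1' : (0:ℝ) < ‖z - 1‖ := by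
    rw [norm_pos_iff]
    exact sub_ne_zero.mpr hz1
  calc ‖z‖ * (‖z ^ n - 1‖ / ‖z - 1‖) ≤ 1 * (2 / ‖z - 1‖) := by
        gcongr
    _ = 2 / ‖z - 1‖ := one_mul _
  
/-- Let `g : Ω → ℂ` be measurable with `|g| ≤ 1` a.e. and `f ∈ L²(μ)`.
Then the averages `(1/n) ∑_{m=1}^n g^m · f` converge in the `L²`-norm to the function
`π(f)` defined by `π(f)(ω) = f(ω)` if `g(ω) = 1` and `π(f)(ω) = 0` otherwise. -/
theorem multiplication_averages_tendsto_projection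
    {Ω : Type*} [MeasurableSpace Ω] (μ : Measure Ω)
    (g : Ω → ℂ) (hg : Measurable g) (hg1 : ∀ᵐ ω ∂μ, ‖g ω‖ ≤ 1)
    (f : Ω → ℂ) (hf : MemLp f 2 μ) :
    Tendsto
      (fun n : ℕ =>
        eLpNorm
          (fun ω =>
            (n : ℂ)⁻¹ * (∑ m ∈ Finset.Icc 1 n, g ω ^ m) * f ω -
              (if g ω = 1 then f ω else 0))
          2 μ)
      atTop (nhds 0) := by
  set F : ℕ → Ω → ℂ := fun n ω =>
    (n : ℂ)⁻¹ * (∑ m ∈ Finset.Icc 1 n, g ω ^ m) * f ω -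
      (if g ω = 1 then f ω else 0) with hFdef
  -- measurability
  have hπmeas : AEStronglyMeasurable (fun ω => if g ω = 1 then f ω else 0) μ := by
    have hs : MeasurableSet {ω | g ω = 1} := hg (measurableSet_singleton 1)
    have heq : (fun ω => if g ω = 1 then f ω else 0) = {ω | g ω = 1}.indicator f := by
      ext ω; simp [Set.indicator_apply, Set.mem_setOf_eq]
    rw [heq]
    exact hf.1.indicator hs
  have hFmeas : ∀ n, AEStronglyMeasurable (F n) μ := by
    intro n
    apply AEStronglyMeasurable.sub _ hπmeas
    apply AEStronglyMeasurable.mul _ hf.1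
    apply Measurable.aestronglyMeasurable
    exact measurable_const.mul (Finset.measurable_sum _ fun m _ => hg.pow_const m)
  -- pointwise bound: ‖F n ω‖ ≤ ‖2 * f ω‖ whenever ‖g ω‖ ≤ 1
  have hbound : ∀ ω, ‖g ω‖ ≤ 1 → ∀ n, ‖F n ω‖ ≤ ‖2 * f ω‖ := by
    intro ω hω n
    have h1 : ‖(n : ℂ)⁻¹ * (∑ m ∈ Finset.Icc 1 n, g ω ^ m) * f ω‖ ≤ ‖f ω‖ := by
      rw [norm_mul, norm_mul]
      have : ‖(n : ℂ)⁻¹‖ * ‖∑ m ∈ Finset.Icc 1 n, g ω ^ m‖ ≤ 1 := by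
        rcases Nat.eq_zero_or_pos n with hn | hn
        · simp [hn]
        · have := aux_norm_bound hω n
          rw [norm_inv, Complex.norm_natCast]
          calc (n : ℝ)⁻¹ * ‖∑ m ∈ Finset.Icc 1 n, g ω ^ m‖
              ≤ (n : ℝ)⁻¹ * n := by
                apply mul_le_mul_of_nonneg_left this (by positivity)
            _ = 1 := inv_mul_cancel₀ (by exact_mod_cast hn.ne')
      calc ‖(n : ℂ)⁻¹‖ * ‖∑ m ∈ Finset.Icc 1 n, g ω ^ m‖ * ‖f ω‖
          ≤ 1 * ‖f ω‖ := mul_le_mul_of_nonneg_right this (norm_nonneg _)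
        _ = ‖f ω‖ := one_mul _
    have h2 : ‖(if g ω = 1 then f ω else 0 : ℂ)‖ ≤ ‖f ω‖ := by
      split <;> simp [norm_nonneg]
    calc ‖F n ω‖ ≤ ‖(n : ℂ)⁻¹ * (∑ m ∈ Finset.Icc 1 n, g ω ^ m) * f ω‖ +
          ‖(if g ω = 1 then f ω else 0 : ℂ)‖ := norm_sub_le _ _
      _ ≤ ‖f ω‖ + ‖f ω‖ := add_le_add h1 h2
      _ = ‖2 * f ω‖ := by rw [norm_mul]; norm_num; ring
  -- pointwise convergence: F n ω → 0 whenever ‖g ω‖ ≤ 1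
  have hlim : ∀ ω, ‖g ω‖ ≤ 1 → Tendsto (fun n => F n ω) atTop (nhds 0) := by
    intro ω hω
    by_cases h1 : g ω = 1
    · apply tendsto_const_nhds.congr'
      filter_upwards [eventually_ge_atTop 1] with n hn
      have hn' : (n : ℂ) ≠ 0 := Nat.cast_ne_zero.mpr (by omega)
      simp [hFdef, h1, Nat.card_Icc, inv_mul_cancel₀ hn']
    · rw [tendsto_zero_iff_norm_tendsto_zero]
      have key : ∀ n : ℕ, ‖F n ω‖ ≤ (n : ℝ)⁻¹ * (2 / ‖1 - g ω‖ * ‖f ω‖) := by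
        intro n
        simp only [hFdef, if_neg h1, sub_zero, norm_mul, norm_inv, Complex.norm_natCast]
        rw [mul_assoc]
        refine mul_le_mul_of_nonneg_left ?_ (by positivity)
        exact mul_le_mul_of_nonneg_right (aux_geom_bound hω h1 n) (norm_nonneg _)
      refine squeeze_zero (fun n => norm_nonneg _) key ?_
      have := tendsto_inv_atTop_nhds_zero_nat.mul_const (2 / ‖1 - g ω‖ * ‖f ω‖)
      simpa using this
    -- done
  -- dominated convergence for the lintegrals
  have hf2 : MemLp (fun ω => 2 * f ω) 2 μ := hf.const_mul 2
  have hfin : ∫⁻ ω, (↑‖2 * f ω‖₊ : ENNReal) ^ (2:ℝ) ∂μ ≠ ⊤ := by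
    have := lintegral_rpow_enorm_lt_top_of_eLpNorm_lt_top (f := fun ω => 2 * f ω)
      (p := 2) (by norm_num) (by norm_num) hf2.2
    simpa [enorm_eq_nnnorm] using this.ne
  have hDCT : Tendsto (fun n => ∫⁻ ω, (↑‖F n ω‖₊ : ENNReal) ^ (2:ℝ) ∂μ) atTop (nhds 0) := by
    have h0 : (0 : ENNReal) = ∫⁻ _, (0 : ENNReal) ∂μ := by simp
    rw [h0]
    apply tendsto_lintegral_of_dominated_convergence'
      (fun ω => (↑‖2 * f ω‖₊ : ENNReal) ^ (2:ℝ))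
    · intro n
      exact ((hFmeas n).enorm).pow_const _
    · intro n
      filter_upwards [hg1] with ω hω
      have := hbound ω hω n
      exact ENNReal.rpow_le_rpow (by exact_mod_cast this) (by norm_num)
    · exact hfin
    · filter_upwards [hg1] with ω hω
      have h1 : Tendsto (fun n => (↑‖F n ω‖₊ : ENNReal)) atTop (nhds 0) := by
        have := (hlim ω hω)
        rw [← ENNReal.coe_zero]
        rw [ENNReal.tendsto_coe]
        rw [← nnnorm_zero (E := ℂ)]
        exact this.nnnorm
      have h2 := ((ENNReal.continuous_rpow_const (y := (2:ℝ))).tendsto 0).comp h1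
      have h0 : ((0:ENNReal)) ^ ((2:ℝ)) = 0 := ENNReal.zero_rpow_of_pos (by norm_num)
      simpa [Function.comp_def, h0] using h2
  -- conclude: eLpNorm = (lintegral)^(1/2)
  have heq : ∀ n, eLpNorm (F n) 2 μ =
      (∫⁻ ω, (↑‖F n ω‖₊ : ENNReal) ^ (2:ℝ) ∂μ) ^ ((1:ℝ)/2) := by
    intro n
    rw [eLpNorm_eq_lintegral_rpow_enorm_toReal (by norm_num) (by norm_num)]
    norm_num [enorm_eq_nnnorm]
  simp only [hFdef] at heq ⊢
  rw [show (fun n : ℕ => eLpNorm (fun ω =>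
      (n : ℂ)⁻¹ * (∑ m ∈ Finset.Icc 1 n, g ω ^ m) * f ω -
        (if g ω = 1 then f ω else 0)) 2 μ) = fun n =>
      (∫⁻ ω, (↑‖F n ω‖₊ : ENNReal) ^ (2:ℝ) ∂μ) ^ ((1:ℝ)/2) from funext heq]
  have h2 := ((ENNReal.continuous_rpow_const (y := (1:ℝ)/2)).tendsto 0).comp hDCT
  have h0 : ((0:ENNReal)) ^ ((1:ℝ)/2) = 0 := ENNReal.zero_rpow_of_pos (by norm_num)
  simpa [Function.comp_def, h0] using h2
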